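/- In the hyperbolic plane (upper half-plane model with base point o = i), for every boundary horofunction ξ and every r > 0, the set {z ∈ H² : ξ(z) + d(o,z) > r} is contained in a cone at o of visual angle at most 4·arctan((e^r − 1)^{−1/2}). -/

import Mathlib

open Filter Topology

namespace Complex

noncomputable def abs : AbsoluteValue ℂ ℝ := NormedField.toAbsoluteValue ℂ

lemma abs_def' (z : ℂ) : abs z = ‖z‖ := rfl

lemma norm_eq_abs (z : ℂ) : ‖z‖ = abs z := rfl

lemma abs_apply (z : ℂ) : abs z = Real.sqrt (normSq z) := by
  rw [abs_def', ← Complex.sq_norm, Real.sqrt_sq (norm_nonneg _)]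

lemma abs_conj (z : ℂ) : abs ((starRingEnd ℂ) z) = abs z := by
  simp [abs_def']

@[simp] lemma abs_I : abs I = 1 := by simp [abs_def']

@[simp] lemma abs_two : abs 2 = 2 := by simp [abs_def']

lemma continuous_abs : Continuous abs := continuous_norm

lemma abs_mul_exp_arg_mul_I (x : ℂ) : ↑(abs x) * exp (arg x * I) = x :=
  norm_mul_exp_arg_mul_I x

lemma abs_mul_cos_arg (x : ℂ) : abs x * Real.cos (arg x) = x.re := norm_mul_cos_arg x

lemma abs_exp (z : ℂ) : abs (exp z) = Real.exp z.re := norm_exp z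

lemma sq_abs (z : ℂ) : abs z ^ 2 = normSq z := by rw [abs_def', Complex.sq_norm]

lemma normSq_eq_abs (x : ℂ) : normSq x = abs x ^ 2 := (sq_abs x).symm

end Complex


private lemma tanh_to_one : Tendsto Real.tanh atTop (𝓝 1) := by
  have h : Real.tanh = fun x : ℝ => 1 - 2 / (Real.exp (2*x) + 1) := by
    funext x
    have h1 : (0:ℝ) < Real.exp x := Real.exp_pos x
    have h2 : Real.exp (2*x) = Real.exp x * Real.exp x := by rw [two_mul, Real.exp_add]
    have h3 : (0:ℝ) < Real.exp (2*x) + 1 := by positivity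
    rw [Real.tanh_eq_sinh_div_cosh, Real.sinh_eq, Real.cosh_eq, Real.exp_neg, h2]
    field_simp
    ring
  rw [h]
  have hA : Tendsto (fun x : ℝ => Real.exp (2*x) + 1) atTop atTop :=
    (Real.tendsto_exp_atTop.comp (tendsto_id.const_mul_atTop two_pos)).atTop_add tendsto_const_nhds
  have h0 : Tendsto (fun x : ℝ => 2 / (Real.exp (2*x) + 1)) atTop (𝓝 0) :=
    Tendsto.div_atTop tendsto_const_nhds hA
  simpa using tendsto_const_nhds.sub h0

private lemma cayley_abs_lt_one (w : UpperHalfPlane) :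
    Complex.abs (((w:ℂ) - Complex.I)/((w:ℂ) + Complex.I)) < 1 := by
  have hb : (w:ℂ) + Complex.I ≠ 0 := by
    intro h
    have := congrArg Complex.im h
    simp [Complex.add_im] at this
    linarith [w.im_pos]
  rw [map_div₀, div_lt_one (by simpa [Complex.abs.pos_iff] using hb)]
  have h1 : Complex.normSq ((w:ℂ) - Complex.I) < Complex.normSq ((w:ℂ) + Complex.I) := by
    simp only [Complex.normSq_apply, Complex.sub_re, Complex.sub_im, Complex.add_re,
      Complex.add_im, Complex.I_re, Complex.I_im]
    have him : (0:ℝ) < ((w:ℂ)).im := w.im_pos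
    nlinarith [him]
  rw [Complex.abs_apply, Complex.abs_apply]
  exact Real.sqrt_lt_sqrt (Complex.normSq_nonneg _) h1

private lemma cayley_abs_eq_tanh (z : UpperHalfPlane) :
    Complex.abs (((z:ℂ) - Complex.I)/((z:ℂ) + Complex.I))
      = Real.tanh (dist UpperHalfPlane.I z / 2) := by
  rw [dist_comm, UpperHalfPlane.tanh_half_dist z UpperHalfPlane.I]
  simp [UpperHalfPlane.coe_I, Complex.conj_I, Complex.dist_eq, sub_neg_eq_add, map_div₀, Complex.abs_def']

private lemma exp_gromov (z w : UpperHalfPlane) :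
    Real.exp ((dist z UpperHalfPlane.I - dist z w + dist UpperHalfPlane.I w) / 2)
      = ((1 + Complex.abs (((z:ℂ) - Complex.I)/((z:ℂ) + Complex.I)))
          * (1 + Complex.abs (((w:ℂ) - Complex.I)/((w:ℂ) + Complex.I))))
        / (Complex.abs (((z:ℂ) - Complex.I)/((z:ℂ) + Complex.I)
              - ((w:ℂ) - Complex.I)/((w:ℂ) + Complex.I))
           + Complex.abs (1 - (((z:ℂ) - Complex.I)/((z:ℂ) + Complex.I))
              * (starRingEnd ℂ) (((w:ℂ) - Complex.I)/((w:ℂ) + Complex.I)))) := by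
  set a : ℂ := (z:ℂ) with ha'
  set b : ℂ := (w:ℂ) with hb'
  have hza : 0 < z.im := z.im_pos
  have hwb : 0 < w.im := w.im_pos
  have haim : a.im = z.im := rfl
  have hbim : b.im = w.im := rfl
  have ha : a + Complex.I ≠ 0 := by
    intro h
    have := congrArg Complex.im h
    simp [Complex.add_im, haim] at this
    linarith
  have hb : b + Complex.I ≠ 0 := by
    intro h
    have := congrArg Complex.im h
    simp [Complex.add_im, hbim] at this
    linarith
  have hcb : (starRingEnd ℂ) b - Complex.I ≠ 0 := by
    intro h
    have := congrArg Complex.im h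
    simp [Complex.sub_im, Complex.conj_im, hbim] at this
    linarith
  have hacb : a - (starRingEnd ℂ) b ≠ 0 := by
    intro h
    have := congrArg Complex.im h
    simp [Complex.sub_im, Complex.conj_im, haim, hbim] at this
    linarith
  -- algebraic identities
  have id1 : (a - Complex.I)/(a + Complex.I) - (b - Complex.I)/(b + Complex.I)
      = 2*Complex.I*(a - b)/((a + Complex.I)*(b + Complex.I)) := by
    field_simp
    ring
  have hconj : (starRingEnd ℂ) ((b - Complex.I)/(b + Complex.I))
      = ((starRingEnd ℂ) b + Complex.I)/((starRingEnd ℂ) b - Complex.I) := by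
    simp [map_div₀, Complex.conj_I, sub_neg_eq_add]
    rw [sub_eq_add_neg]
  have id2 : 1 - ((a - Complex.I)/(a + Complex.I))
        * (starRingEnd ℂ) ((b - Complex.I)/(b + Complex.I))
      = 2*Complex.I*((starRingEnd ℂ) b - a)/((a + Complex.I)*((starRingEnd ℂ) b - Complex.I)) := by
    rw [hconj]
    field_simp
    ring
  have abs1 : Complex.abs ((a - Complex.I)/(a + Complex.I) - (b - Complex.I)/(b + Complex.I))
      = 2 * Complex.abs (a - b) / (Complex.abs (a + Complex.I) * Complex.abs (b + Complex.I)) := by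
    rw [id1]
    simp [map_div₀, map_mul, Complex.abs_I, Complex.abs_two]
  have habscb : Complex.abs ((starRingEnd ℂ) b - Complex.I) = Complex.abs (b + Complex.I) := by
    rw [show (starRingEnd ℂ) b - Complex.I = (starRingEnd ℂ) (b + Complex.I) by
      simp [Complex.conj_I]; ring]
    exact Complex.abs_conj _
  have abs2 : Complex.abs (1 - ((a - Complex.I)/(a + Complex.I))
        * (starRingEnd ℂ) ((b - Complex.I)/(b + Complex.I)))
      = 2 * Complex.abs (a - (starRingEnd ℂ) b)
        / (Complex.abs (a + Complex.I) * Complex.abs (b + Complex.I)) := by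
    rw [id2]
    rw [show (starRingEnd ℂ) b - a = -(a - (starRingEnd ℂ) b) by ring]
    simp [map_div₀, map_mul, Complex.abs_I, Complex.abs_two, habscb]
    rw [Complex.abs.map_sub ((starRingEnd ℂ) b) a]
  -- distances
  rw [show (dist z UpperHalfPlane.I - dist z w + dist UpperHalfPlane.I w)/2
      = dist z UpperHalfPlane.I/2 + dist UpperHalfPlane.I w/2 - dist z w/2 by ring,
    Real.exp_sub, Real.exp_add, UpperHalfPlane.exp_half_dist, UpperHalfPlane.exp_half_dist,
    UpperHalfPlane.exp_half_dist]
  have hIb : Complex.abs (Complex.I - b) = Complex.abs (b - Complex.I) := by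
    rw [← Complex.abs.map_neg]; ring_nf
  have hIcb : Complex.abs (Complex.I - (starRingEnd ℂ) b) = Complex.abs (b + Complex.I) := by
    rw [show Complex.I - (starRingEnd ℂ) b = -((starRingEnd ℂ) (b + Complex.I)) by
      simp [Complex.conj_I]; ring]
    rw [Complex.abs.map_neg]
    exact Complex.abs_conj _
  simp only [UpperHalfPlane.coe_I, UpperHalfPlane.I_im, Complex.dist_eq, Complex.conj_I,
    sub_neg_eq_add, mul_one, one_mul, ← ha', ← hb', Complex.norm_eq_abs, hIb, hIcb]
  rw [abs1, abs2, map_div₀, map_div₀]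
  have hs3 : Real.sqrt (z.im * w.im) = Real.sqrt z.im * Real.sqrt w.im := Real.sqrt_mul hza.le _
  have hs1 : (0:ℝ) < Real.sqrt z.im := Real.sqrt_pos.mpr hza
  have hs2 : (0:ℝ) < Real.sqrt w.im := Real.sqrt_pos.mpr hwb
  have hPa : (0:ℝ) < Complex.abs (a + Complex.I) := by
    simpa [Complex.abs.pos_iff] using ha
  have hPb : (0:ℝ) < Complex.abs (b + Complex.I) := by
    simpa [Complex.abs.pos_iff] using hb
  have hden : (0:ℝ) < Complex.abs (a - b) + Complex.abs (a - (starRingEnd ℂ) b) := by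
    have : (0:ℝ) < Complex.abs (a - (starRingEnd ℂ) b) := by
      simpa [Complex.abs.pos_iff, sub_ne_zero] using hacb
    have h0 : (0:ℝ) ≤ Complex.abs (a - b) := Complex.abs.nonneg _
    linarith
  rw [hs3]
  have h2 : 2 * Complex.abs (a - b) / (Complex.abs (a + Complex.I) * Complex.abs (b + Complex.I))
      + 2 * Complex.abs (a - (starRingEnd ℂ) b)
        / (Complex.abs (a + Complex.I) * Complex.abs (b + Complex.I))
      = 2 * (Complex.abs (a - b) + Complex.abs (a - (starRingEnd ℂ) b))
        / (Complex.abs (a + Complex.I) * Complex.abs (b + Complex.I)) := by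
    rw [← add_div]; ring_nf
  rw [h2]
  field_simp [hs1.ne', hs2.ne', hPa.ne', hPb.ne', hden.ne']
  ring

private lemma angle_bound {r s Q ψ : ℝ} (hr : 0 < r) (hs0 : 0 ≤ s)
    (hQpos : 0 < Q) (hQlt : Q * Real.exp (r/2) < 1 + s)
    (hQsq : Q^2 = s^2 + 1 - 2*(s * Real.cos ψ))
    (hψpi : |ψ| ≤ Real.pi) :
    |ψ| ≤ 2 * Real.arctan (1 / Real.sqrt (Real.exp r - 1)) := by
  have hE : (1:ℝ) < Real.exp r := by
    rw [show (1:ℝ) = Real.exp 0 from Real.exp_zero.symm]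
    exact Real.exp_lt_exp.mpr hr
  have hEs : 0 < Real.sqrt (Real.exp r - 1) := Real.sqrt_pos.mpr (by linarith)
  set α := Real.arctan (1 / Real.sqrt (Real.exp r - 1)) with hα
  have hαpos : 0 < α := by
    rw [hα, ← Real.arctan_zero]
    exact Real.arctan_strictMono (by positivity)
  have hαlt : α < Real.pi/2 := Real.arctan_lt_pi_div_two _
  have hsqrtE : Real.sqrt (Real.exp r) = Real.exp (r/2) := by
    rw [show Real.exp r = Real.exp (r/2) ^ 2 by rw [sq, ← Real.exp_add]; ring_nf]
    exact Real.sqrt_sq (Real.exp_pos _).le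
  have hsinα : Real.sin α = Real.exp (-(r/2)) := by
    rw [hα, Real.sin_arctan]
    have h2 : (1 / Real.sqrt (Real.exp r - 1))^2 = 1 / (Real.exp r - 1) := by
      rw [div_pow, one_pow, Real.sq_sqrt (by linarith)]
    rw [h2, show 1 + 1/(Real.exp r - 1) = Real.exp r / (Real.exp r - 1) by
        field_simp [ne_of_gt (show (0:ℝ) < Real.exp r - 1 by linarith)]; ring,
      Real.sqrt_div (Real.exp_pos r).le, hsqrtE, Real.exp_neg]
    rw [div_div_div_cancel_right₀]
    · rw [one_div]
    · exact hEs.ne'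
  have hc1 : -1 ≤ Real.cos ψ := Real.neg_one_le_cos ψ
  have hsinhalf : Real.sin (ψ/2)^2 = 1/2 - Real.cos ψ / 2 := by
    have h8 := Real.sin_sq_eq_half_sub (ψ/2)
    rwa [show 2*(ψ/2) = ψ by ring] at h8
  have hkey : (1+s)^2 * Real.sin (ψ/2)^2 ≤ Q^2 := by
    rw [hQsq, hsinhalf]
    nlinarith [mul_nonneg (sq_nonneg (1-s)) (by linarith : (0:ℝ) ≤ 1 + Real.cos ψ)]
  have hexphalf : Real.exp (r/2) * Real.exp (r/2) = Real.exp r := by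
    rw [← Real.exp_add]; ring_nf
  have hQsqlt : Q^2 * Real.exp r < (1+s)^2 := by
    have he0 : (0:ℝ) < Real.exp (r/2) := Real.exp_pos _
    have h1 : 0 < Q * Real.exp (r/2) := mul_pos hQpos he0
    have h2 : (Q * Real.exp (r/2)) * (Q * Real.exp (r/2)) < (1+s) * (1+s) :=
      mul_self_lt_mul_self h1.le hQlt
    calc Q^2 * Real.exp r = (Q * Real.exp (r/2)) * (Q * Real.exp (r/2)) := by
          rw [← hexphalf]; ring
      _ < (1+s) * (1+s) := h2
      _ = (1+s)^2 := by ring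
  have hsinlt : Real.sin (ψ/2)^2 * Real.exp r < 1 := by
    have h1s : (0:ℝ) < (1+s)^2 := by positivity
    nlinarith [Real.exp_pos r]
  have habs_sin : |Real.sin (ψ/2)| < Real.sin α := by
    have hsinαpos : 0 < Real.sin α := by rw [hsinα]; exact Real.exp_pos _
    have h6 : Real.sin α ^ 2 * Real.exp r = 1 := by
      rw [hsinα, sq, ← Real.exp_add, ← Real.exp_add,
        show -(r/2) + -(r/2) + r = 0 by ring, Real.exp_zero]
    by_contra hcon
    push_neg at hcon
    have h9 : Real.sin α ^2 ≤ Real.sin (ψ/2)^2 := by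
      have h10 := mul_self_le_mul_self hsinαpos.le hcon
      calc Real.sin α ^2 = Real.sin α * Real.sin α := sq (Real.sin α)
        _ ≤ |Real.sin (ψ/2)| * |Real.sin (ψ/2)| := h10
        _ = Real.sin (ψ/2)^2 := by rw [← abs_mul, abs_mul_self, sq]
    nlinarith [Real.exp_pos r]
  have hhalfle : |ψ|/2 ≤ Real.pi/2 := by linarith
  have hsinabs : Real.sin (|ψ|/2) = |Real.sin (ψ/2)| := by
    rcases le_or_gt 0 ψ with h | h
    · rw [abs_of_nonneg h, abs_of_nonneg (Real.sin_nonneg_of_nonneg_of_le_pi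
        (by linarith) (by rw [abs_of_nonneg h] at hψpi; linarith))]
    · rw [abs_of_neg h, abs_of_nonpos (Real.sin_nonpos_of_nonpos_of_neg_pi_le
        (by linarith) (by rw [abs_of_neg h] at hψpi; linarith))]
      rw [show -ψ/2 = -(ψ/2) by ring, Real.sin_neg]
  by_contra hcon2
  push_neg at hcon2
  have hαmem : α ∈ Set.Icc (-(Real.pi/2)) (Real.pi/2) := ⟨by linarith, hαlt.le⟩
  have hψmem : |ψ|/2 ∈ Set.Icc (-(Real.pi/2)) (Real.pi/2) :=
    ⟨by linarith [abs_nonneg ψ, Real.pi_pos], hhalfle⟩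
  have h11 := Real.strictMonoOn_sin hαmem hψmem (by linarith)
  rw [hsinabs] at h11
  linarith

/-- In the hyperbolic plane (upper half-plane model, base point `o = i`),
for every boundary horofunction `ξ` (a limit of `ξ_{z_n}(w) = d(z_n,o) - d(z_n,w)` with
`d(o,z_n) → ∞`, normalized `ξ(o) = 0`) and every `r > 0`, the set
`{z : ξ(z) + d(o,z) > r}` is contained in a cone at `o` of visual angle at most
`4 arctan((e^r - 1)^{-1/2})`.  The visual direction of `w` from `o = i` is recorded by
the argument of `(w - i)/(w + i)` (the Möbius map to the disk model sends geodesic rays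
from `i` to radii), and the cone with axis direction `θ₀` and total angle `4 arctan(⋯)`
is the set of `w` whose direction makes angle at most `2 arctan(⋯)` with `θ₀`. -/
theorem stmt9 (xi : UpperHalfPlane → ℝ)
    (hbdry : ∃ z : ℕ → UpperHalfPlane,
      Tendsto (fun n => dist UpperHalfPlane.I (z n)) atTop atTop ∧
      ∀ w : UpperHalfPlane,
        Tendsto (fun n => dist (z n) UpperHalfPlane.I - dist (z n) w) atTop (𝓝 (xi w))) :
    ∀ r : ℝ, 0 < r → ∃ θ₀ : ℝ, ∀ w : UpperHalfPlane,
      xi w + dist UpperHalfPlane.I w > r →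
      |Complex.arg ((((w : ℂ) - Complex.I) / ((w : ℂ) + Complex.I)) *
          Complex.exp (-(θ₀ : ℂ) * Complex.I))|
        ≤ 2 * Real.arctan (1 / Real.sqrt (Real.exp r - 1)) := by
  obtain ⟨z, hzinf, hzxi⟩ := hbdry
  intro r hr
  set u : ℕ → ℂ := fun n => (((z n):ℂ) - Complex.I)/(((z n):ℂ) + Complex.I) with hu
  have humem : ∀ n, u n ∈ Metric.closedBall (0:ℂ) 1 := fun n => by
    rw [Metric.mem_closedBall, dist_zero_right, Complex.norm_eq_abs]
    exact (cayley_abs_lt_one (z n)).le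
  obtain ⟨ζ, hζmem, φ, hφmono, hφlim⟩ := (isCompact_closedBall (0:ℂ) 1).tendsto_subseq humem
  have hρ : Tendsto (fun n => Complex.abs (u n)) atTop (𝓝 1) := by
    have heq : (fun n => Complex.abs (u n))
        = fun n => Real.tanh (dist UpperHalfPlane.I (z n) / 2) := by
      funext n; exact cayley_abs_eq_tanh (z n)
    rw [heq]
    exact tanh_to_one.comp (hzinf.atTop_div_const two_pos)
  have hζabs : Complex.abs ζ = 1 := by
    have h1 : Tendsto (fun k => Complex.abs (u (φ k))) atTop (𝓝 (Complex.abs ζ)) :=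
      (Complex.continuous_abs.continuousAt.tendsto).comp hφlim
    have h2 : Tendsto (fun k => Complex.abs (u (φ k))) atTop (𝓝 1) :=
      hρ.comp hφmono.tendsto_atTop
    exact tendsto_nhds_unique h1 h2
  refine ⟨Complex.arg ζ, fun w hw => ?_⟩
  set v : ℂ := ((w:ℂ) - Complex.I)/((w:ℂ) + Complex.I) with hv
  have hs1 : Complex.abs v < 1 := cayley_abs_lt_one w
  have hζv : ζ - v ≠ 0 := by
    intro h
    rw [sub_eq_zero] at h
    rw [← h, hζabs] at hs1
    exact lt_irrefl _ hs1
  have hQpos : 0 < Complex.abs (ζ - v) := by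
    simpa [Complex.abs.pos_iff] using hζv
  set F : ℂ → ℝ := fun x => ((1 + Complex.abs x) * (1 + Complex.abs v))
      / (Complex.abs (x - v) + Complex.abs (1 - x * (starRingEnd ℂ) v)) with hF
  have hgF : ∀ n, Real.exp ((dist (z n) UpperHalfPlane.I - dist (z n) w
      + dist UpperHalfPlane.I w)/2) = F (u n) := fun n => exp_gromov (z n) w
  have hcont : ContinuousAt F ζ := by
    have hnum : ContinuousAt (fun x : ℂ => (1 + Complex.abs x) * (1 + Complex.abs v)) ζ :=
      ((continuous_const.add Complex.continuous_abs).mul continuous_const).continuousAt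
    have hden : ContinuousAt (fun x : ℂ =>
        Complex.abs (x - v) + Complex.abs (1 - x * (starRingEnd ℂ) v)) ζ := by
      apply ContinuousAt.add
      · exact (Complex.continuous_abs.comp (continuous_id.sub continuous_const)).continuousAt
      · exact (Complex.continuous_abs.comp
          (continuous_const.sub (continuous_id.mul continuous_const))).continuousAt
    refine hnum.div hden ?_
    have h1 : (0:ℝ) ≤ Complex.abs (1 - ζ * (starRingEnd ℂ) v) := Complex.abs.nonneg _
    exact ne_of_gt (by linarith)
  have hlim1 : Tendsto (fun k => F (u (φ k))) atTop (𝓝 (F ζ)) := hcont.tendsto.comp hφlim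
  have hlim2 : Tendsto (fun k => F (u (φ k))) atTop
      (𝓝 (Real.exp ((xi w + dist UpperHalfPlane.I w)/2))) := by
    have h3 : Tendsto (fun n => Real.exp ((dist (z n) UpperHalfPlane.I - dist (z n) w
        + dist UpperHalfPlane.I w)/2)) atTop
        (𝓝 (Real.exp ((xi w + dist UpperHalfPlane.I w)/2))) :=
      (Real.continuous_exp.continuousAt.tendsto).comp
        (((hzxi w).add_const _).div_const 2)
    have h4 := h3.comp hφmono.tendsto_atTop
    simpa only [Function.comp_def, hgF] using h4
  have hexpeq : Real.exp ((xi w + dist UpperHalfPlane.I w)/2) = F ζ :=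
    tendsto_nhds_unique hlim2 hlim1
  have h1ζv : Complex.abs (1 - ζ * (starRingEnd ℂ) v) = Complex.abs (ζ - v) := by
    have hid : 1 - ζ * (starRingEnd ℂ) v = ζ * (starRingEnd ℂ) (ζ - v) := by
      rw [map_sub, mul_sub, Complex.mul_conj, Complex.normSq_eq_abs, hζabs]
      norm_num
    rw [hid, map_mul, Complex.abs_conj, hζabs, one_mul]
  have hFζ : F ζ = (1 + Complex.abs v) / Complex.abs (ζ - v) := by
    simp only [hF, hζabs, h1ζv]
    field_simp
  have hQlt : Complex.abs (ζ - v) * Real.exp (r/2) < 1 + Complex.abs v := by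
    have h4 : Real.exp (r/2) < Real.exp ((xi w + dist UpperHalfPlane.I w)/2) :=
      Real.exp_lt_exp.mpr (by linarith)
    rw [hexpeq, hFζ] at h4
    calc Complex.abs (ζ - v) * Real.exp (r/2)
        < Complex.abs (ζ - v) * ((1 + Complex.abs v) / Complex.abs (ζ - v)) :=
          (mul_lt_mul_iff_right₀ hQpos).mpr h4
      _ = 1 + Complex.abs v := by field_simp
  set v' : ℂ := v * Complex.exp (-(↑(Complex.arg ζ):ℂ) * Complex.I) with hv'
  have hζne : ζ ≠ 0 := by
    intro h
    rw [h] at hζabs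
    simp at hζabs
  have hexpζ : Complex.exp ((↑(Complex.arg ζ):ℂ) * Complex.I) = ζ := by
    have h5 := Complex.abs_mul_exp_arg_mul_I ζ
    rwa [hζabs, Complex.ofReal_one, one_mul] at h5
  have hrot : v - ζ = (v' - 1) * ζ := by
    rw [hv', show -(↑(Complex.arg ζ):ℂ) * Complex.I = -((↑(Complex.arg ζ):ℂ) * Complex.I)
      by ring, Complex.exp_neg, hexpζ]
    field_simp
  have hQ' : Complex.abs (v' - 1) = Complex.abs (ζ - v) := by
    have h6 : Complex.abs (v - ζ) = Complex.abs (v' - 1) * Complex.abs ζ := by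
      rw [hrot, map_mul]
    rw [hζabs, mul_one] at h6
    rw [← h6, Complex.abs.map_sub]
  have habsv' : Complex.abs v' = Complex.abs v := by
    rw [hv', map_mul, Complex.abs_exp]
    simp
  have hre : Complex.abs v * Real.cos (Complex.arg v') = v'.re := by
    rw [← habsv']
    exact Complex.abs_mul_cos_arg v'
  have hssq : (Complex.abs v)^2 = v'.re*v'.re + v'.im*v'.im := by
    rw [← habsv', Complex.sq_abs, Complex.normSq_apply]
  have hQsq : Complex.abs (ζ - v) ^ 2
      = (Complex.abs v)^2 + 1 - 2*((Complex.abs v) * Real.cos (Complex.arg v')) := by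
    rw [hre, ← hQ', Complex.sq_abs, Complex.normSq_apply]
    simp only [Complex.sub_re, Complex.sub_im, Complex.one_re, Complex.one_im]
    nlinarith [hssq]
  exact angle_bound hr (Complex.abs.nonneg v) hQpos hQlt hQsq (Complex.abs_arg_le_pi v')
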